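/- Let ν, C, T > 0 be real numbers, set δ = min{1, ν/4}·e^(−2CT) and L = δ⁻¹. Let h : [0,T] → [0,∞) be integrable and a ≥ 0 a real number with a + ∫₀ᵀ h(t) dt < δ. Let φ : [0,T] → [0,∞) be continuous on [0,T], differentiable on (0,T), with φ(0) ≤ a and φ′(t) ≤ C·(φ(t) + φ(t)³) + (4/ν)·h(t) for all t ∈ (0,T). Then for every t ∈ [0,T] one has φ(t) ≤ L·(a + ∫₀ᵀ h(s) ds) < 1. -/

import Mathlib

open MeasureTheory intervalIntegral Real Set

set_option maxHeartbeats 1000000 in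
/-- Gronwall-type comparison lemma: let `ν, C, T > 0`, set
`δ = min 1 (ν/4) · e^(−2CT)` and `L = δ⁻¹`. Let `h : [0,T] → [0,∞)` be
integrable and `a ≥ 0` with `a + ∫₀ᵀ h < δ`. If `φ : [0,T] → [0,∞)` is
continuous on `[0,T]`, differentiable on `(0,T)` with derivative `φ'`,
`φ(0) ≤ a` and `φ′(t) ≤ C·(φ(t) + φ(t)³) + (4/ν)·h(t)` on `(0,T)`, then
`φ(t) ≤ L·(a + ∫₀ᵀ h) < 1` for every `t ∈ [0,T]`. -/
theorem gronwall_truncation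
    (ν C T : ℝ) (hν : 0 < ν) (hC : 0 < C) (hT : 0 < T)
    (δ L : ℝ) (hδ : δ = min 1 (ν / 4) * Real.exp (-2 * C * T)) (hL : L = δ⁻¹)
    (h : ℝ → ℝ) (hint : IntervalIntegrable h volume 0 T)
    (hnonneg : ∀ t ∈ Icc (0 : ℝ) T, 0 ≤ h t)
    (a : ℝ) (ha : 0 ≤ a) (hsmall : a + ∫ t in (0 : ℝ)..T, h t < δ)
    (φ φ' : ℝ → ℝ) (hφc : ContinuousOn φ (Icc 0 T))
    (hφnonneg : ∀ t ∈ Icc (0 : ℝ) T, 0 ≤ φ t)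
    (hφ0 : φ 0 ≤ a)
    (hderiv : ∀ t ∈ Ioo (0 : ℝ) T, HasDerivAt φ (φ' t) t)
    (hineq : ∀ t ∈ Ioo (0 : ℝ) T,
      φ' t ≤ C * (φ t + φ t ^ 3) + (4 / ν) * h t) :
    ∀ t ∈ Icc (0 : ℝ) T,
      φ t ≤ L * (a + ∫ s in (0 : ℝ)..T, h s)
        ∧ L * (a + ∫ s in (0 : ℝ)..T, h s) < 1 := by
  set I : ℝ := ∫ s in (0 : ℝ)..T, h s with hIdef
  set m : ℝ := min 1 (ν / 4) with hm
  have hmpos : 0 < m := lt_min one_pos (by linarith)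
  have hδpos : 0 < δ := by rw [hδ]; positivity
  have hLpos : 0 < L := by rw [hL]; exact inv_pos.2 hδpos
  have hI : 0 ≤ I :=
    intervalIntegral.integral_nonneg hT.le (fun u hu => hnonneg u hu)
  have haI : 0 ≤ a + I := by linarith
  have hr1 : L * (a + I) < 1 := by
    rw [hL]
    have := mul_lt_mul_of_pos_left hsmall (inv_pos.2 hδpos)
    rwa [inv_mul_cancel₀ hδpos.ne'] at this
  have hLval : L = m⁻¹ * Real.exp (2 * C * T) := by
    rw [hL, hδ, mul_inv]
    congr 1
    rw [show (-2 : ℝ) * C * T = -(2 * C * T) by ring, Real.exp_neg, inv_inv]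
  have hminv1 : (1 : ℝ) ≤ m⁻¹ := by
    simpa using inv_anti₀ hmpos (min_le_left 1 (ν / 4))
  have hminv2 : 4 / ν ≤ m⁻¹ := by
    have h1 : (ν / 4)⁻¹ ≤ m⁻¹ :=
      inv_anti₀ hmpos (min_le_right _ _)
    rw [inv_div] at h1
    exact h1
  -- key lemma: if φ ≤ 1 on the interior of [0, τ], then φ ≤ L(a+I) on [0, τ]
  have key : ∀ τ ∈ Icc (0 : ℝ) T, (∀ s ∈ Ioo (0 : ℝ) τ, φ s ≤ 1) →
      ∀ t ∈ Icc (0 : ℝ) τ, φ t ≤ L * (a + I) := by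
    intro τ hτ hb1 t ht
    have htT : t ≤ T := ht.2.trans hτ.2
    have ht0 : 0 ≤ t := ht.1
    set w : ℝ → ℝ := fun s => Real.exp (-2 * C * s) * φ s with hw
    have hwc : ContinuousOn w (Icc 0 t) := by
      apply ContinuousOn.mul
      · exact (Real.continuous_exp.comp (continuous_const.mul continuous_id)).continuousOn
      · exact hφc.mono (Icc_subset_Icc le_rfl htT)
    have hwd : ∀ x ∈ Ioo (0 : ℝ) t,
        HasDerivWithinAt w (Real.exp (-2 * C * x) * (φ' x - 2 * C * φ x)) (Ioi x) x := by
      intro x hx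
      have hxT : x ∈ Ioo (0 : ℝ) T := ⟨hx.1, hx.2.trans_le htT⟩
      have hexp : HasDerivAt (fun s : ℝ => Real.exp (-2 * C * s))
          (Real.exp (-2 * C * x) * (-2 * C)) x := by
        have := ((hasDerivAt_id x).const_mul (-2 * C)).exp
        simpa [mul_comm] using this
      have : HasDerivAt (fun y => Real.exp (-2 * C * y) * φ y)
          (Real.exp (-2 * C * x) * (-2 * C) * φ x + Real.exp (-2 * C * x) * φ' x) x :=
        hexp.mul (hderiv x hxT)
      have h2 : HasDerivAt w (Real.exp (-2 * C * x) * (φ' x - 2 * C * φ x)) x := by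
        convert this using 1
        ring
      exact h2.hasDerivWithinAt
    have hφint : IntegrableOn (fun s => (4 / ν) * h s) (Icc 0 t) volume := by
      rw [integrableOn_Icc_iff_integrableOn_Ioc]
      exact ((hint.1).mono_set (Ioc_subset_Ioc le_rfl htT)).const_mul _
    have hle : ∀ x ∈ Ioo (0 : ℝ) t,
        Real.exp (-2 * C * x) * (φ' x - 2 * C * φ x) ≤ (4 / ν) * h x := by
      intro x hx
      have hxT : x ∈ Ioo (0 : ℝ) T := ⟨hx.1, hx.2.trans_le htT⟩
      have hφ1 : φ x ≤ 1 := hb1 x ⟨hx.1, hx.2.trans_le ht.2⟩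
      have hφ0x : 0 ≤ φ x := hφnonneg x ⟨hxT.1.le, hxT.2.le⟩
      have hhx : 0 ≤ h x := hnonneg x ⟨hxT.1.le, hxT.2.le⟩
      have h1 : φ' x - 2 * C * φ x ≤ (4 / ν) * h x := by
        have h0 := hineq x hxT
        have hsq : φ x ^ 2 ≤ 1 := by nlinarith
        nlinarith [mul_nonneg (mul_nonneg hC.le hφ0x) (sub_nonneg.2 hsq)]
      have hexp1 : Real.exp (-2 * C * x) ≤ 1 := by
        rw [Real.exp_le_one_iff]
        nlinarith [hx.1]
      have hexppos : 0 < Real.exp (-2 * C * x) := Real.exp_pos _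
      have hrhs : 0 ≤ (4 / ν) * h x := by positivity
      nlinarith [mul_le_mul_of_nonneg_left h1 hexppos.le]
    have hsub := sub_le_integral_of_hasDeriv_right_of_le ht0 hwc hwd hφint hle
    have hintineq : ∫ y in (0 : ℝ)..t, (4 / ν) * h y ≤ (4 / ν) * I := by
      rw [intervalIntegral.integral_const_mul]
      apply mul_le_mul_of_nonneg_left _ (by positivity)
      apply intervalIntegral.integral_mono_interval le_rfl ht0 htT _ hint
      filter_upwards [ae_restrict_mem measurableSet_Ioc] with x hx
      exact hnonneg x ⟨hx.1.le, hx.2⟩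
    have hw0 : w 0 = φ 0 := by simp [hw]
    have hwt : Real.exp (-2 * C * t) * φ t ≤ a + (4 / ν) * I := by
      have : w t - w 0 ≤ (4 / ν) * I := hsub.trans hintineq
      rw [hw0] at this
      simp only [hw] at this
      linarith
    -- multiply by exp(2Ct)
    have hexppos : 0 < Real.exp (2 * C * t) := Real.exp_pos _
    have hφt : φ t ≤ Real.exp (2 * C * t) * (a + (4 / ν) * I) := by
      have := mul_le_mul_of_nonneg_left hwt hexppos.le
      rwa [← mul_assoc, ← Real.exp_add, show (2 * C * t + -2 * C * t) = 0 by ring,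
        Real.exp_zero, one_mul] at this
    have h2 : a + (4 / ν) * I ≤ m⁻¹ * (a + I) := by
      nlinarith
    have h3 : Real.exp (2 * C * t) ≤ Real.exp (2 * C * T) := by
      apply Real.exp_le_exp.2
      nlinarith
    calc φ t ≤ Real.exp (2 * C * t) * (a + (4 / ν) * I) := hφt
      _ ≤ Real.exp (2 * C * T) * (m⁻¹ * (a + I)) := by
          apply mul_le_mul h3 h2 (by positivity) (Real.exp_pos _).le
      _ = L * (a + I) := by rw [hLval]; ring
  -- bootstrap: φ ≤ L(a+I) on all of [0,T]
  have hφ0lt : φ 0 < 1 := by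
    have hδle : δ < 1 := by
      rw [hδ]
      have h1 : Real.exp (-2 * C * T) < 1 := by
        rw [Real.exp_lt_one_iff]; nlinarith
      have h2 : m ≤ 1 := min_le_left _ _
      nlinarith [Real.exp_pos (-2 * C * T)]
    linarith
  have hclaim : ∀ t ∈ Icc (0 : ℝ) T, φ t ≤ L * (a + I) := by
    by_contra hcon
    push_neg at hcon
    obtain ⟨t0, ht0, hgt⟩ := hcon
    set K : Set ℝ := Icc 0 T ∩ φ ⁻¹' Ici 1 with hK
    by_cases hKe : K.Nonempty
    · have hKclosed : IsClosed K :=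
        hφc.preimage_isClosed_of_isClosed isClosed_Icc isClosed_Ici
      have hKcomp : IsCompact K :=
        isCompact_Icc.of_isClosed_subset hKclosed inter_subset_left
      set u := sInf K with hu
      have huK : u ∈ K := hKcomp.sInf_mem hKe
      have hu1 : 1 ≤ φ u := huK.2
      have huIcc : u ∈ Icc (0 : ℝ) T := huK.1
      have hb : ∀ s ∈ Ioo (0 : ℝ) u, φ s ≤ 1 := by
        intro s hs
        by_contra hs1
        push_neg at hs1
        have hsK : s ∈ K := ⟨⟨hs.1.le, hs.2.le.trans huIcc.2⟩, hs1.le⟩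
        have := csInf_le hKcomp.bddBelow hsK
        exact absurd this (not_le.2 hs.2)
      have := key u huIcc hb u ⟨huIcc.1, le_rfl⟩
      linarith
    · have hb : ∀ s ∈ Ioo (0 : ℝ) T, φ s ≤ 1 := by
        intro s hs
        by_contra hs1
        push_neg at hs1
        exact hKe ⟨s, ⟨hs.1.le, hs.2.le⟩, hs1.le⟩
      have := key T ⟨hT.le, le_rfl⟩ hb t0 ht0
      linarith
  intro t ht
  exact ⟨hclaim t ht, hr1⟩
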